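/- Let H be a finite abelian group of order n and let G = H ⋊ C₂ be the generalised dihedral group of H, i.e. the semidirect product of H with the two-element group acting on H by the inversion automorphism (so |G| = 2n). Suppose S ⊆ G satisfies 1 ∉ S, S = S⁻¹, and every element of G is a product of at most two elements of S. Then |S| ≥ 2√n − 1. -/

import Mathlib

/-- The action of `ℤˣ = {±1}` on a commutative group `H` in which `-1` acts by the
inversion automorphism. -/
def invAut (H : Type*) [CommGroup H] : ℤˣ →* MulAut H where
  toFun u := if u = 1 then 1 else MulEquiv.inv H
  map_one' := by simp
  map_mul' a b := by
    rcases Int.units_eq_one_or a with ha | ha <;> rcases Int.units_eq_one_or b with hb | hb <;>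
      subst ha <;> subst hb <;> ext h <;> simp [MulEquiv.inv] <;> exact (inv_inv h).symm

/-- **Lemma 2 (upper bound).** Let `G = H ⋊ C₂` be the generalised dihedral group of a
finite abelian group `H` of order `n`, and let `S` be an inverse-closed subset of `G` not
containing the identity such that every element of `G` is a product of at most two
elements of `S` (i.e. `Cay(G,S)` has diameter at most 2). Then the degree `d = |S|`
satisfies `d ≥ 2√n - 1`. -/
theorem generalised_dihedral_diameter_two_degree_bound
    (H : Type*) [CommGroup H] [Fintype H] (n : ℕ) (hn : Fintype.card H = n)
    (S : Finset (H ⋊[invAut H] ℤˣ))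
    (h1 : (1 : H ⋊[invAut H] ℤˣ) ∉ S)
    (hinv : ∀ s ∈ S, s⁻¹ ∈ S)
    (hcov : ∀ g : H ⋊[invAut H] ℤˣ, g = 1 ∨ g ∈ S ∨ ∃ a ∈ S, ∃ b ∈ S, g = a * b) :
    (S.card : ℝ) ≥ 2 * Real.sqrt n - 1 := by
  classical
  subst hn
  have hne : (-1 : ℤˣ) ≠ 1 := by decide
  have hφ1 : ∀ x : H, invAut H 1 x = x := fun x => rfl
  have hφm : ∀ x : H, invAut H (-1) x = x⁻¹ := by
    intro x
    show (if (-1 : ℤˣ) = 1 then (1 : MulAut H) else MulEquiv.inv H) x = x⁻¹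
    rw [if_neg hne]; rfl
  set A := S.filter (fun g => g.right = 1) with hA
  set B := S.filter (fun g => g.right ≠ 1) with hB
  have hcard : A.card + B.card = S.card := Finset.card_filter_add_card_filter_not _
  set Ai := A.image SemidirectProduct.left with hAi
  set Bi := B.image SemidirectProduct.left with hBi
  set T := Bi ∪ Finset.image₂ (· * ·) Ai Bi with hT
  have hcover : ∀ h : H, h ∈ T := by
    intro h
    have hg : (⟨h, -1⟩ : H ⋊[invAut H] ℤˣ) ≠ 1 := by
      intro hc
      have := congrArg SemidirectProduct.right hc
      exact hne this
    rcases hcov ⟨h, -1⟩ with hc | hc | ⟨a, ha, b, hb, hab⟩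
    · exact absurd hc hg
    · apply Finset.mem_union_left
      exact Finset.mem_image.2 ⟨_, Finset.mem_filter.2 ⟨hc, hne⟩, rfl⟩
    · have hr : a.right * b.right = -1 := (congrArg SemidirectProduct.right hab).symm
      have hl : h = a.left * invAut H a.right b.left := congrArg SemidirectProduct.left hab
      rcases Int.units_eq_one_or a.right with har | har
      · -- a rotation, b reflection
        have hbr : b.right = -1 := by rw [har, one_mul] at hr; exact hr
        apply Finset.mem_union_right
        apply Finset.mem_image₂.2
        refine ⟨a.left, Finset.mem_image.2 ⟨a, Finset.mem_filter.2 ⟨ha, har⟩, rfl⟩,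
          b.left, Finset.mem_image.2 ⟨b, Finset.mem_filter.2 ⟨hb, by rw [hbr]; exact hne⟩, rfl⟩, ?_⟩
        rw [hl, har, hφ1]
      · have hbr : b.right = 1 := by
          rcases Int.units_eq_one_or b.right with h' | h'
          · exact h'
          · rw [har, h'] at hr; exact absurd hr (by decide)
        -- a reflection, b rotation; use b⁻¹ ∈ A
        have hbinv : b⁻¹ ∈ S := hinv b hb
        have hbinvr : (b⁻¹).right = 1 := by rw [SemidirectProduct.inv_right, hbr]; rfl
        have hbinvl : (b⁻¹).left = b.left⁻¹ := by
          rw [SemidirectProduct.inv_left, hbr, inv_one, hφ1]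
        apply Finset.mem_union_right
        apply Finset.mem_image₂.2
        refine ⟨b.left⁻¹, Finset.mem_image.2 ⟨b⁻¹, Finset.mem_filter.2 ⟨hbinv, hbinvr⟩, hbinvl⟩,
          a.left, Finset.mem_image.2 ⟨a, Finset.mem_filter.2 ⟨ha, by rw [har]; exact hne⟩, rfl⟩, ?_⟩
        rw [hl, har, hφm]
        exact mul_comm _ _
  have hTcard : Fintype.card H ≤ B.card + A.card * B.card := by
    calc Fintype.card H = (Finset.univ : Finset H).card := rfl
      _ ≤ T.card := Finset.card_le_card (fun x _ => hcover x)
      _ ≤ Bi.card + (Finset.image₂ (· * ·) Ai Bi).card := Finset.card_union_le _ _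
      _ ≤ Bi.card + Ai.card * Bi.card := by
          gcongr; exact Finset.card_image₂_le _ _ _
      _ ≤ B.card + A.card * B.card := by
          gcongr <;> exact Finset.card_image_le
  -- now real arithmetic
  obtain ⟨a, b, ha', hb'⟩ : ∃ a b : ℝ, a = (A.card:ℝ) ∧ b = (B.card:ℝ) := ⟨_, _, rfl, rfl⟩
  have ha0 : 0 ≤ a := ha' ▸ Nat.cast_nonneg _
  have hb0 : 0 ≤ b := hb' ▸ Nat.cast_nonneg _
  have hn' : (Fintype.card H : ℝ) ≤ b + a * b := by rw [ha', hb']; exact_mod_cast hTcard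
  have hSc : (S.card : ℝ) = a + b := by rw [ha', hb']; exact_mod_cast hcard.symm
  have hsq : 4 * (Fintype.card H : ℝ) ≤ ((S.card : ℝ) + 1)^2 := by
    rw [hSc]; nlinarith [sq_nonneg (a + 1 - b)]
  have h2 : 2 * Real.sqrt (Fintype.card H) ≤ (S.card : ℝ) + 1 := by
    have := Real.sqrt_le_sqrt hsq
    rw [Real.sqrt_sq (by positivity)] at this
    calc 2 * Real.sqrt (Fintype.card H) = Real.sqrt (4 * (Fintype.card H)) := by
          rw [show (4:ℝ) = 2^2 by norm_num, Real.sqrt_mul (by positivity), Real.sqrt_sq (by norm_num)]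
      _ ≤ _ := this
  linarith
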